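/- arXiv:2304.06435 — 6 statements merged into one kernel-verified Lean document; each statement's English description precedes it below -/
import Mathlib

section
/- Let n, k ≥ 1 and let a, b ≥ 0 with a + b = nk. Let π be a partition of {1, …, nk} into k blocks each of cardinality n, and for 0 ≤ i ≤ n let m_i be the number of blocks B of π with |B ∩ {1, …, a}| = i. Then the stabilizer of π inside the Young subgroup S_a × S_b of S_{nk} (the permutations preserving {1, …, a} that map every block of π onto a block of π) is isomorphic to the direct product ∏_{i=0}^n ((S_i × S_{n−i}) ≀ S_{m_i}) of wreath products. -/
/-- The action of `Equiv.Perm (Fin m)` on `Fin m → G` by permuting the coordinates. -/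
def permuteCoordsAct (G : Type*) [Group G] (m : ℕ) :
    Equiv.Perm (Fin m) →* MulAut (Fin m → G) where
  toFun σ :=
    { toEquiv := Equiv.arrowCongr σ (Equiv.refl G)
      map_mul' := fun f g => rfl }
  map_one' := by ext f i; rfl
  map_mul' := fun σ τ => by ext f i; rfl

/-- The wreath product `G ≀ S_m`, i.e. the semidirect product
`(Fin m → G) ⋊ Perm (Fin m)` where `Perm (Fin m)` permutes the coordinates. -/
def WreathProduct (G : Type*) [Group G] (m : ℕ) : Type _ :=
  SemidirectProduct (Fin m → G) (Equiv.Perm (Fin m)) (permuteCoordsAct G m)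

noncomputable instance (G : Type*) [Group G] (m : ℕ) : Group (WreathProduct G m) :=
  inferInstanceAs (Group (SemidirectProduct _ _ _))

open Finset Equiv

namespace YS
noncomputable section

variable {G : Type*} [Group G] {X : Type*} (α : G →* Equiv.Perm X) (m : ℕ)

def fN : (Fin m → G) →* Equiv.Perm (Fin m × X) where
  toFun f := Equiv.prodShear (Equiv.refl (Fin m)) (fun j => α (f j))
  map_one' := by ext ⟨j, z⟩ <;> simp [Equiv.prodShear]
  map_mul' f g := by ext ⟨j, z⟩ <;> simp [Equiv.prodShear]

def fS : Equiv.Perm (Fin m) →* Equiv.Perm (Fin m × X) where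
  toFun σ := Equiv.prodCongr σ (Equiv.refl X)
  map_one' := by ext ⟨j, z⟩ <;> simp
  map_mul' σ τ := by ext ⟨j, z⟩ <;> simp

def wAct : WreathProduct G m →* Equiv.Perm (Fin m × X) :=
  SemidirectProduct.lift (fN α m) (fS m) (by
    intro σ
    ext f ⟨j, z⟩ <;>
      simp [fN, fS, Equiv.prodShear, MulAut.conj_apply, Equiv.Perm.mul_apply,
        permuteCoordsAct, Equiv.Perm.inv_def, Equiv.prodCongr_symm] <;> rfl)

lemma wAct_apply (w : WreathProduct G m) (j : Fin m) (z : X) :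
    wAct α m w (j, z) = (w.right j, α (w.left (w.right j)) z) := by
  show ((fN α m w.left) ((fS m w.right) (j, z))) = _
  rfl

lemma wAct_injective (hα : Function.Injective α) (hX : Nonempty X) :
    Function.Injective (wAct α m) := by
  rw [injective_iff_map_eq_one]
  intro w hw
  obtain ⟨z⟩ := hX
  have hr : w.right = 1 := by
    apply Equiv.ext
    intro j
    have := congrArg Prod.fst (congrFun (congrArg (fun (e : Equiv.Perm (Fin m × X)) => (e : Fin m × X → Fin m × X)) hw) (j, z))
    simpa [wAct_apply] using this
  have hl : w.left = 1 := by
    funext j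
    apply hα
    show α (w.left j) = α 1
    rw [map_one]
    apply Equiv.ext
    intro z'
    have := congrArg Prod.snd (congrFun (congrArg (fun (e : Equiv.Perm (Fin m × X)) => (e : Fin m × X → Fin m × X)) hw) (j, z'))
    simpa [wAct_apply, hr] using this
  have : w = SemidirectProduct.inl w.left * SemidirectProduct.inr w.right :=
    (SemidirectProduct.inl_left_mul_inr_right w).symm
  rw [this, hl, hr]; simp; exact mul_one _

/-- conjugation of permutation groups by an equivalence, as a `MulEquiv`. -/
def permConj {β : Type*} (e : X ≃ β) : Equiv.Perm X ≃* Equiv.Perm β where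
  toEquiv := e.permCongr
  map_mul' p q := by ext x; simp [Equiv.permCongr_apply]



variable {n k : ℕ} (a : ℕ) (π : Finpartition (Finset.univ : Finset (Fin (n * k))))

def cnt (B : Finset (Fin (n * k))) : ℕ := (B.filter fun x => x.val < a).card

def P (i : ℕ) : Finset (Finset (Fin (n * k))) := π.parts.filter fun B => cnt a B = i

def mm (i : ℕ) : ℕ := (P a π i).card

def eB (i : ℕ) : ↥(P a π i) ≃ Fin (mm a π i) := (P a π i).equivFin

lemma card_left (B : Finset (Fin (n * k))) :
    Fintype.card {x : ↥B // (x : Fin (n * k)).val < a} = cnt a B := by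
  rw [Fintype.card_congr (Equiv.subtypeSubtypeEquivSubtypeInter
    (fun x : Fin (n * k) => x ∈ B) (fun x => x.val < a)), Fintype.card_subtype]
  unfold cnt; congr 1; ext x; simp

lemma cnt_le_card (B : Finset (Fin (n * k))) : cnt a B ≤ B.card :=
  Finset.card_filter_le _ _

lemma card_right (B : Finset (Fin (n * k))) (hB : B.card = n) :
    Fintype.card {x : ↥B // ¬ (x : Fin (n * k)).val < a} = n - cnt a B := by
  rw [Fintype.card_congr (Equiv.subtypeSubtypeEquivSubtypeInter
    (fun x : Fin (n * k) => x ∈ B) (fun x => ¬ x.val < a)), Fintype.card_subtype]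
  have h2 := Finset.card_filter_add_card_filter_not
    (s := B) (p := fun x : Fin (n * k) => x.val < a)
  have h3 : (Finset.filter (fun x => x ∈ B ∧ ¬x.val < a) Finset.univ).card
      = (B.filter fun x => ¬ x.val < a).card := by congr 1; ext x; simp
  unfold cnt
  omega

def φ (B : Finset (Fin (n * k))) (hB : B.card = n) :
    ↥B ≃ (Fin (cnt a B) ⊕ Fin (n - cnt a B)) :=
  (Equiv.sumCompl fun x : ↥B => (x : Fin (n * k)).val < a).symm.trans
    (Equiv.sumCongr (Fintype.equivFinOfCardEq (card_left a B))
      (Fintype.equivFinOfCardEq (card_right a B hB)))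

lemma φ_isLeft (B : Finset (Fin (n * k))) (hB : B.card = n) (y : ↥B) :
    (φ a B hB y).isLeft ↔ (y : Fin (n * k)).val < a := by
  unfold φ
  by_cases h : (y : Fin (n * k)).val < a
  · simp [Equiv.sumCompl_symm_apply_of_pos h, h]
  · simp [Equiv.sumCompl_symm_apply_of_neg h, h]

def blkOf (i : Fin (n + 1)) (j : Fin (mm a π i.1)) : Finset (Fin (n * k)) :=
  ((eB a π i.1).symm j : ↥(P a π i.1))

lemma blkOf_mem (i : Fin (n + 1)) (j : Fin (mm a π i.1)) : blkOf a π i j ∈ π.parts :=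
  (Finset.mem_filter.mp ((eB a π i.1).symm j).2).1

lemma cnt_blkOf (i : Fin (n + 1)) (j : Fin (mm a π i.1)) : cnt a (blkOf a π i j) = i.1 :=
  (Finset.mem_filter.mp ((eB a π i.1).symm j).2).2

lemma blkOf_card (hπn : ∀ B ∈ π.parts, B.card = n) (i : Fin (n + 1)) (j : Fin (mm a π i.1)) : (blkOf a π i j).card = n :=
  hπn _ (blkOf_mem a π i j)

lemma blkOf_inj {i : Fin (n + 1)} {j j' : Fin (mm a π i.1)}
    (h : blkOf a π i j = blkOf a π i j') : j = j' := by
  have : (eB a π i.1).symm j = (eB a π i.1).symm j' := Subtype.ext h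
  exact (eB a π i.1).symm.injective this

/-- the cast from block-indexed coordinates to `i`-indexed coordinates -/
def castE (i : Fin (n + 1)) (j : Fin (mm a π i.1)) :
    (Fin (cnt a (blkOf a π i j)) ⊕ Fin (n - cnt a (blkOf a π i j)))
      ≃ (Fin i.1 ⊕ Fin (n - i.1)) :=
  Equiv.sumCongr (finCongr (cnt_blkOf a π i j)) (finCongr (by rw [cnt_blkOf]))

/-- The indexing type. -/
abbrev TT : Type _ := Σ i : Fin (n + 1), Fin (mm a π i.1) × (Fin i.1 ⊕ Fin (n - i.1))

def invF (hπn : ∀ B ∈ π.parts, B.card = n) (p : TT a π) : Fin (n * k) :=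
  ((φ a (blkOf a π p.1 p.2.1) (blkOf_card a π hπn p.1 p.2.1)).symm
    ((castE a π p.1 p.2.1).symm p.2.2) : ↥(blkOf a π p.1 p.2.1))

lemma invF_mem (hπn : ∀ B ∈ π.parts, B.card = n) (p : TT a π) : invF a π hπn p ∈ blkOf a π p.1 p.2.1 :=
  ((φ a (blkOf a π p.1 p.2.1) (blkOf_card a π hπn p.1 p.2.1)).symm
    ((castE a π p.1 p.2.1).symm p.2.2)).2

lemma exists_blk (hπn : ∀ B ∈ π.parts, B.card = n) (x : Fin (n * k)) : ∃ i j, x ∈ blkOf a π i j := by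
  have hx : x ∈ π.part x := π.mem_part (Finset.mem_univ x)
  have hmem : π.part x ∈ π.parts := π.part_mem.mpr (Finset.mem_univ x)
  have hle : cnt a (π.part x) ≤ n := by
    have := cnt_le_card a (π.part x); rw [hπn _ hmem] at this; exact this
  refine ⟨⟨cnt a (π.part x), Nat.lt_succ_of_le hle⟩,
    eB a π _ ⟨π.part x, Finset.mem_filter.mpr ⟨hmem, rfl⟩⟩, ?_⟩
  simpa [blkOf] using hx

lemma blk_eq_of_mem {B : Finset (Fin (n * k))} (hB : B ∈ π.parts)
    {i : Fin (n + 1)} {j : Fin (mm a π i.1)} {x : Fin (n * k)}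
    (hxB : x ∈ B) (hxb : x ∈ blkOf a π i j) : B = blkOf a π i j :=
  π.eq_of_mem_parts hB (blkOf_mem a π i j) hxB hxb

lemma exists_blk_eq (hπn : ∀ B ∈ π.parts, B.card = n) {B : Finset (Fin (n * k))} (hB : B ∈ π.parts) :
    ∃ i j, B = blkOf a π i j := by
  have hle : cnt a B ≤ n := by
    have := cnt_le_card a B; rw [hπn _ hB] at this; exact this
  refine ⟨⟨cnt a B, Nat.lt_succ_of_le hle⟩,
    eB a π _ ⟨B, Finset.mem_filter.mpr ⟨hB, rfl⟩⟩, ?_⟩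
  simp [blkOf]

lemma invF_bij (hπn : ∀ B ∈ π.parts, B.card = n) : Function.Bijective (invF a π hπn) := by
  constructor
  · rintro ⟨i, j, z⟩ ⟨i', j', z'⟩ h
    have h1 : blkOf a π i j = blkOf a π i' j' :=
      π.eq_of_mem_parts (blkOf_mem a π i j) (blkOf_mem a π i' j')
        (invF_mem a π hπn ⟨i, j, z⟩) (h ▸ invF_mem a π hπn ⟨i', j', z'⟩)
    have hii : i = i' := by
      have := cnt_blkOf a π i j
      rw [h1, cnt_blkOf a π i' j'] at this
      exact (Fin.ext this).symm
    subst hii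
    have hjj : j = j' := blkOf_inj a π h1
    subst hjj
    have hz : z = z' := by
      have hsub : ((φ a (blkOf a π i j) (blkOf_card a π hπn i j)).symm
          ((castE a π i j).symm z)) = ((φ a (blkOf a π i j) (blkOf_card a π hπn i j)).symm
          ((castE a π i j).symm z')) := Subtype.ext h
      have := (φ a (blkOf a π i j) (blkOf_card a π hπn i j)).symm.injective hsub
      exact (castE a π i j).symm.injective this
    rw [hz]
  · intro x
    obtain ⟨i, j, hx⟩ := exists_blk a π hπn x
    refine ⟨⟨i, j, castE a π i j (φ a _ (blkOf_card a π hπn i j) ⟨x, hx⟩)⟩, ?_⟩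
    simp [invF]

def EE (hπn : ∀ B ∈ π.parts, B.card = n) : Fin (n * k) ≃ TT a π := (Equiv.ofBijective _ (invF_bij a π hπn)).symm

lemma EE_symm_apply (hπn : ∀ B ∈ π.parts, B.card = n) (p : TT a π) : (EE a π hπn).symm p = invF a π hπn p := rfl

lemma EE_apply_of_mem (hπn : ∀ B ∈ π.parts, B.card = n) {i : Fin (n + 1)} {j : Fin (mm a π i.1)} {x : Fin (n * k)}
    (hx : x ∈ blkOf a π i j) :
    EE a π hπn x = ⟨i, j, castE a π i j (φ a _ (blkOf_card a π hπn i j) ⟨x, hx⟩)⟩ := by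
  rw [Equiv.apply_eq_iff_eq_symm_apply, EE_symm_apply]
  simp [invF]

lemma EE_isLeft (hπn : ∀ B ∈ π.parts, B.card = n) (x : Fin (n * k)) :
    ((EE a π hπn x).2.2).isLeft ↔ x.val < a := by
  obtain ⟨i, j, hx⟩ := exists_blk a π hπn x
  rw [EE_apply_of_mem a π hπn hx]
  have : ∀ z, ((castE a π i j) z).isLeft = z.isLeft := by
    intro z; cases z <;> simp [castE]
  rw [this]
  exact φ_isLeft a _ _ _


variable {n k : ℕ} (a : ℕ) (π : Finpartition (Finset.univ : Finset (Fin (n * k))))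

/-- The big product of wreath products. -/
def bigW : Type _ := Π i : Fin (n + 1),
  WreathProduct (Equiv.Perm (Fin i.1) × Equiv.Perm (Fin (n - i.1))) (mm a π i.1)

instance : Group (bigW a π) := inferInstanceAs (Group (Π _i : Fin (n+1), WreathProduct _ _))

def piHom : bigW a π →*
    Π i : Fin (n + 1), Equiv.Perm (Fin (mm a π i.1) × (Fin i.1 ⊕ Fin (n - i.1))) where
  toFun w i := wAct (Equiv.Perm.sumCongrHom (Fin i.1) (Fin (n - i.1))) (mm a π i.1) (w i)
  map_one' := by funext i; exact map_one _
  map_mul' w w' := by funext i; exact map_mul _ _ _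

def actT : bigW a π →* Equiv.Perm (TT a π) :=
  (Equiv.Perm.sigmaCongrRightHom
    (fun i : Fin (n + 1) => Fin (mm a π i.1) × (Fin i.1 ⊕ Fin (n - i.1)))).comp (piHom a π)

lemma actT_apply (w : bigW a π) (i : Fin (n + 1)) (j : Fin (mm a π i.1))
    (z : Fin i.1 ⊕ Fin (n - i.1)) :
    actT a π w ⟨i, (j, z)⟩ = ⟨i, ((w i).right j,
      Equiv.Perm.sumCongrHom _ _ ((w i).left ((w i).right j)) z)⟩ := rfl

def Phi (hπn : ∀ B ∈ π.parts, B.card = n) : bigW a π →* Equiv.Perm (Fin (n * k)) :=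
  (permConj (EE a π hπn).symm).toMonoidHom.comp (actT a π)

lemma Phi_apply (hπn : ∀ B ∈ π.parts, B.card = n) (w : bigW a π) (x : Fin (n * k)) :
    Phi a π hπn w x = (EE a π hπn).symm (actT a π w (EE a π hπn x)) := rfl

lemma X_nonempty (hn : 1 ≤ n) (i : Fin (n + 1)) : Nonempty (Fin i.1 ⊕ Fin (n - i.1)) := by
  rcases Nat.eq_zero_or_pos i.1 with h | h
  · exact ⟨Sum.inr ⟨0, by omega⟩⟩
  · exact ⟨Sum.inl ⟨0, h⟩⟩

lemma Phi_injective (hn : 1 ≤ n) (hπn : ∀ B ∈ π.parts, B.card = n) :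
    Function.Injective (Phi a π hπn) := by
  apply Function.Injective.comp (g := (permConj (EE a π hπn).symm).toMonoidHom)
  · exact (permConj (EE a π hπn).symm).injective
  · apply Function.Injective.comp (g := Equiv.Perm.sigmaCongrRightHom _)
    · exact Equiv.Perm.sigmaCongrRightHom_injective
    · intro w w' h
      funext i
      exact wAct_injective _ _ Equiv.Perm.sumCongrHom_injective (X_nonempty hn i)
        (congrFun h i)

lemma sumCongrHom_isLeft {A B : Type*} (p : Equiv.Perm A × Equiv.Perm B) (z : A ⊕ B) :
    ((Equiv.Perm.sumCongrHom A B p) z).isLeft = z.isLeft := by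
  obtain ⟨p1, p2⟩ := p; cases z <;> simp [Equiv.Perm.sumCongrHom]

lemma castE_isLeft (i : Fin (n + 1)) (j : Fin (mm a π i.1))
    (z : Fin (cnt a (blkOf a π i j)) ⊕ Fin (n - cnt a (blkOf a π i j))) :
    ((castE a π i j) z).isLeft = z.isLeft := by cases z <;> simp [castE]

lemma castE_symm_isLeft (i : Fin (n + 1)) (j : Fin (mm a π i.1))
    (z : Fin i.1 ⊕ Fin (n - i.1)) :
    ((castE a π i j).symm z).isLeft = z.isLeft := by cases z <;> simp [castE]

lemma Phi_lt (hπn : ∀ B ∈ π.parts, B.card = n) (w : bigW a π) (x : Fin (n * k)) :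
    x.val < a ↔ (Phi a π hπn w x).val < a := by
  rw [← EE_isLeft a π hπn x, ← EE_isLeft a π hπn (Phi a π hπn w x), Phi_apply,
    Equiv.apply_symm_apply]
  obtain ⟨i, j, hx⟩ := exists_blk a π hπn x
  rw [EE_apply_of_mem a π hπn hx, actT_apply, sumCongrHom_isLeft]

set_option maxHeartbeats 1000000 in
lemma Phi_image_blk (hπn : ∀ B ∈ π.parts, B.card = n) (w : bigW a π)
    (i : Fin (n + 1)) (j : Fin (mm a π i.1)) :
    (blkOf a π i j).image (Phi a π hπn w) = blkOf a π i ((w i).right j) := by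
  apply Finset.eq_of_subset_of_card_le
  · intro y hy
    obtain ⟨x, hx, rfl⟩ := Finset.mem_image.mp hy
    rw [Phi_apply]
    rw [EE_apply_of_mem a π hπn hx]
    rw [actT_apply]
    rw [EE_symm_apply]
    exact invF_mem a π hπn ⟨i, ((w i).right j, _)⟩
  · rw [Finset.card_image_of_injective _ (Phi a π hπn w).injective,
      blkOf_card a π hπn, blkOf_card a π hπn]

lemma cnt_image (σ : Equiv.Perm (Fin (n * k))) (h1 : ∀ x : Fin (n * k), x.val < a ↔ (σ x).val < a)
    (B : Finset (Fin (n * k))) : cnt a (B.image σ) = cnt a B := by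
  unfold cnt
  have : (B.image σ).filter (fun x => x.val < a) = (B.filter fun x => x.val < a).image σ := by
    ext y
    simp only [Finset.mem_filter, Finset.mem_image]
    constructor
    · rintro ⟨⟨x, hx, rfl⟩, hy⟩
      exact ⟨x, ⟨hx, (h1 x).mpr hy⟩, rfl⟩
    · rintro ⟨x, ⟨hx, hxa⟩, rfl⟩
      exact ⟨⟨x, hx, rfl⟩, (h1 x).mp hxa⟩
  rw [this, Finset.card_image_of_injective _ σ.injective]

lemma mem_range_of_stab (hπn : ∀ B ∈ π.parts, B.card = n) (σ : Equiv.Perm (Fin (n * k)))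
    (h1 : ∀ x : Fin (n * k), x.val < a ↔ (σ x).val < a)
    (h2 : ∀ B ∈ π.parts, B.image σ ∈ π.parts) :
    ∃ w : bigW a π, Phi a π hπn w = σ := by
  classical
  have himg : ∀ (i : Fin (n + 1)) (j : Fin (mm a π i.1)),
      (blkOf a π i j).image σ ∈ P a π i.1 := fun i j =>
    Finset.mem_filter.mpr ⟨h2 _ (blkOf_mem a π i j),
      by rw [cnt_image a σ h1]; exact cnt_blkOf a π i j⟩
  -- the permutation of block indices
  have tinj : ∀ i : Fin (n + 1), Function.Injective
      (fun j => eB a π i.1 ⟨(blkOf a π i j).image σ, himg i j⟩) := by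
    intro i j j' h
    have h' : (⟨(blkOf a π i j).image σ, himg i j⟩ : ↥(P a π i.1))
        = ⟨(blkOf a π i j').image σ, himg i j'⟩ := (eB a π i.1).injective h
    have h'' : (blkOf a π i j).image σ = (blkOf a π i j').image σ := congrArg Subtype.val h'
    exact blkOf_inj a π (Finset.image_injective σ.injective h'')
  let τ : ∀ i : Fin (n + 1), Equiv.Perm (Fin (mm a π i.1)) := fun i =>
    Equiv.ofBijective _ (Finite.injective_iff_bijective.mp (tinj i))
  have hblk_t : ∀ (i : Fin (n + 1)) (j : Fin (mm a π i.1)),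
      blkOf a π i (τ i j) = (blkOf a π i j).image σ := by
    intro i j
    unfold blkOf
    rw [show τ i j = eB a π i.1 ⟨(blkOf a π i j).image σ, himg i j⟩ from rfl,
      Equiv.symm_apply_apply]
    rfl
  have hmem : ∀ (i : Fin (n + 1)) (j : Fin (mm a π i.1)) (x : Fin (n * k)),
      x ∈ blkOf a π i j ↔ σ x ∈ blkOf a π i (τ i j) := by
    intro i j x
    rw [hblk_t i j]
    constructor
    · exact fun hx => Finset.mem_image_of_mem σ hx
    · intro hx
      obtain ⟨y, hy, hyx⟩ := Finset.mem_image.mp hx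
      rwa [← σ.injective hyx]
  -- the induced permutation of within-block coordinates
  let g : ∀ (i : Fin (n + 1)) (j : Fin (mm a π i.1)), Equiv.Perm (Fin i.1 ⊕ Fin (n - i.1)) :=
    fun i j => ((castE a π i j).symm.trans
      ((φ a _ (blkOf_card a π hπn i j)).symm.trans
        ((Equiv.subtypeEquiv σ (hmem i j)).trans
          ((φ a _ (blkOf_card a π hπn i (τ i j))).trans (castE a π i (τ i j))))))
  have hg_left : ∀ i j z, ((g i j) z).isLeft = z.isLeft := by
    intro i j z
    rw [Bool.eq_iff_iff]
    show ((castE a π i (τ i j)) ((φ a _ (blkOf_card a π hπn i (τ i j)))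
      ((Equiv.subtypeEquiv σ (hmem i j))
        ((φ a _ (blkOf_card a π hπn i j)).symm ((castE a π i j).symm z))))).isLeft = true
      ↔ z.isLeft = true
    rw [castE_isLeft, φ_isLeft]
    show (σ (((φ a _ (blkOf_card a π hπn i j)).symm
      ((castE a π i j).symm z) : ↥(blkOf a π i j)) : Fin (n * k))).val < a ↔ z.isLeft = true
    rw [← h1, ← φ_isLeft a _ (blkOf_card a π hπn i j), Equiv.apply_symm_apply,
      castE_symm_isLeft]
  have hg_range : ∀ i j, (g i j) ∈ (Equiv.Perm.sumCongrHom (Fin i.1) (Fin (n - i.1))).range := by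
    intro i j
    apply Equiv.Perm.mem_sumCongrHom_range_of_perm_mapsTo_inl
    rintro _ ⟨u, rfl⟩
    have := hg_left i j (Sum.inl u)
    rcases hz : (g i j) (Sum.inl u) with v | v
    · exact ⟨v, rfl⟩
    · rw [hz] at this; simp at this
  let f : ∀ i : Fin (n + 1), Fin (mm a π i.1) →
      Equiv.Perm (Fin i.1) × Equiv.Perm (Fin (n - i.1)) := fun i j' =>
    Classical.choose (hg_range i ((τ i).symm j'))
  have hf : ∀ (i : Fin (n + 1)) (j : Fin (mm a π i.1)),
      Equiv.Perm.sumCongrHom _ _ (f i (τ i j)) = g i j := by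
    intro i j
    show Equiv.Perm.sumCongrHom _ _
      (Classical.choose (hg_range i ((τ i).symm (τ i j)))) = g i j
    rw [Equiv.symm_apply_apply]
    exact Classical.choose_spec (hg_range i j)
  refine ⟨id (α := bigW a π) (fun i => ⟨f i, τ i⟩), ?_⟩
  apply Equiv.ext
  intro x
  obtain ⟨i, j, hx⟩ := exists_blk a π hπn x
  rw [Phi_apply, EE_apply_of_mem a π hπn hx]
  have hw : ∀ i : Fin (n+1), ((fun i => (⟨f i, τ i⟩ : WreathProduct _ _)) i).right = τ i :=
    fun _ => rfl
  rw [actT_apply, EE_symm_apply]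
  show ((φ a _ (blkOf_card a π hπn i (τ i j))).symm ((castE a π i (τ i j)).symm
    (Equiv.Perm.sumCongrHom _ _ (f i (τ i j))
      (castE a π i j ((φ a _ (blkOf_card a π hπn i j)) ⟨x, hx⟩)))) : Fin (n * k)) = σ x
  rw [hf i j]
  show ((φ a _ (blkOf_card a π hπn i (τ i j))).symm ((castE a π i (τ i j)).symm
    ((castE a π i (τ i j)) ((φ a _ (blkOf_card a π hπn i (τ i j)))
      ((Equiv.subtypeEquiv σ (hmem i j))
        ((φ a _ (blkOf_card a π hπn i j)).symm ((castE a π i j).symm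
          (castE a π i j ((φ a _ (blkOf_card a π hπn i j)) ⟨x, hx⟩)))))))) : Fin (n * k)) = σ x
  rw [Equiv.symm_apply_apply, Equiv.symm_apply_apply, Equiv.symm_apply_apply,
    Equiv.symm_apply_apply]
  rfl

end
end YS

/-- The stabilizer, inside the Young subgroup `S_a × S_b ≤ S_{nk}`, of a partition of
`{1,…,nk}` into `k` blocks of cardinality `n` is isomorphic to the direct product of
wreath products `∏_{i=0}^n (S_i × S_{n−i}) ≀ S_{m_i}`, where `m_i` is the number
of blocks meeting `{1,…,a}` in exactly `i` points. -/
theorem young_stabilizer_iso_prod_wreath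
    (n k a b : ℕ) (hn : 1 ≤ n) (hk : 1 ≤ k) (hab : a + b = n * k)
    (π : Finpartition (Finset.univ : Finset (Fin (n * k))))
    (hπk : π.parts.card = k) (hπn : ∀ B ∈ π.parts, B.card = n)
    (m : ℕ → ℕ)
    (hm : ∀ i, m i = (π.parts.filter fun B => (B.filter fun x => x.val < a).card = i).card) :
    ∃ H : Subgroup (Equiv.Perm (Fin (n * k))),
      ((H : Set (Equiv.Perm (Fin (n * k)))) =
        {σ : Equiv.Perm (Fin (n * k)) |
          (∀ x : Fin (n * k), x.val < a ↔ (σ x).val < a) ∧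
          ∀ B ∈ π.parts, B.image σ ∈ π.parts}) ∧
      Nonempty (H ≃* Π i : Fin (n + 1),
        WreathProduct (Equiv.Perm (Fin i.val) × Equiv.Perm (Fin (n - i.val))) (m i.val)) := by
  classical
  obtain rfl : m = fun i =>
      (π.parts.filter fun B => (B.filter fun x => x.val < a).card = i).card := funext hm
  refine ⟨(YS.Phi a π hπn).range, ?_, ?_⟩
  · ext σ
    simp only [SetLike.mem_coe, MonoidHom.mem_range, Set.mem_setOf_eq]
    constructor
    · rintro ⟨w, rfl⟩
      refine ⟨YS.Phi_lt a π hπn w, ?_⟩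
      intro B hB
      obtain ⟨i, j, rfl⟩ := YS.exists_blk_eq a π hπn hB
      rw [YS.Phi_image_blk a π hπn w i j]
      exact YS.blkOf_mem a π i _
    · rintro ⟨hσ1, hσ2⟩
      exact YS.mem_range_of_stab a π hπn σ hσ1 hσ2
  · exact ⟨(MonoidHom.ofInjective (YS.Phi_injective a π hn hπn)).symm⟩
end

section
/- Fix an integer k ≥ 1 and a subset S ⊆ {1, …, k}. Both of the sets I_S[k] and I'_S[k] of admissible tuples are nonempty and closed under the operation taking two tuples to their componentwise minimum (on the entries i_1, …, i_k). Consequently, each of I_S[k] and I'_S[k] has a unique least element with respect to the partial order by componentwise comparison; these least elements are denoted L_{S,k} and L'_{S,k} respectively. -/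
/-- A `2k`-tuple `(ε_1, i_1, …, ε_k, i_k)`; the position `t : Fin k` encodes the
index `j = t + 1 ∈ {1, …, k}`. -/
structure DLTuple (k : ℕ) where
  eps : Fin k → ℕ
  idx : Fin k → ℕ

namespace DLTuple

/-- Admissibility: each `ε_j ∈ {0,1}` and, for all `1 ≤ j < k`,
`i_j ≤ i_{j+1} − ε_{j+1}` and `i_j ≡ i_{j+1} − ε_{j+1} (mod 2)`. -/
def Admissible {k : ℕ} (I : DLTuple k) : Prop :=
  (∀ j, I.eps j ≤ 1) ∧
  ∀ (j : ℕ) (h : j + 1 < k),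
    I.idx ⟨j, Nat.lt_of_succ_lt h⟩ + I.eps ⟨j + 1, h⟩ ≤ I.idx ⟨j + 1, h⟩ ∧
    (I.idx ⟨j, Nat.lt_of_succ_lt h⟩ + I.eps ⟨j + 1, h⟩) % 2 = I.idx ⟨j + 1, h⟩ % 2

/-- Membership in `I_S[k]`: admissible, `ε_j = 1` iff `k+1−j ∈ S`, and
`i_j ≡ |S ∩ {1,…,k−j}| (mod 2)`.  Here an element `s : Fin k` of `S` encodes
the integer `s + 1 ∈ {1, …, k}`, so `k+1−j` is encoded by `Fin.rev`. -/
def MemI {k : ℕ} (S : Finset (Fin k)) (I : DLTuple k) : Prop :=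
  I.Admissible ∧ (∀ j : Fin k, I.eps j = 1 ↔ j.rev ∈ S) ∧
  ∀ j : Fin k, I.idx j % 2 = (S.filter fun s => s.val + 1 + (j.val + 1) ≤ k).card % 2

/-- Membership in `I'_S[k]`: as `I_S[k]`, but with
`i_j ≡ |S ∩ {1,…,k−j}| + 1 (mod 2)`. -/
def MemI' {k : ℕ} (S : Finset (Fin k)) (I : DLTuple k) : Prop :=
  I.Admissible ∧ (∀ j : Fin k, I.eps j = 1 ↔ j.rev ∈ S) ∧
  ∀ j : Fin k, I.idx j % 2 =
    ((S.filter fun s => s.val + 1 + (j.val + 1) ≤ k).card + 1) % 2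

/-- Componentwise comparison of the entries `i_1, …, i_k`. -/
def dle {k : ℕ} (I J : DLTuple k) : Prop := ∀ j, I.idx j ≤ J.idx j

/-- Componentwise minimum on the entries `i_1, …, i_k`. -/
def dmin {k : ℕ} (I J : DLTuple k) : DLTuple k :=
  ⟨I.eps, fun j => min (I.idx j) (J.idx j)⟩

/-- Componentwise addition (in all `2k` entries). -/
def dadd {k : ℕ} (I J : DLTuple k) : DLTuple k :=
  ⟨fun j => I.eps j + J.eps j, fun j => I.idx j + J.idx j⟩

/-- The tuple `I_{j,k}`: all `ε`-entries `0`, `i_l = 0` for `l ≤ k − j` and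
`i_l = 2` for `l > k − j` (here `j : Fin k` encodes the integer `j + 1`). -/
def Ijk {k : ℕ} (j : Fin k) : DLTuple k :=
  ⟨fun _ => 0, fun t => if t.val + j.val + 2 ≤ k then 0 else 2⟩

end DLTuple

namespace DLAux

open DLTuple

variable {k : ℕ}

/-- The `ε`-vector forced by `S`. -/
def epsS (S : Finset (Fin k)) : Fin k → ℕ := fun j => if j.rev ∈ S then 1 else 0

lemma epsS_le_one (S : Finset (Fin k)) (j : Fin k) : epsS S j ≤ 1 := by
  unfold epsS; split <;> simp

lemma epsS_iff (S : Finset (Fin k)) (j : Fin k) : epsS S j = 1 ↔ j.rev ∈ S := by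
  unfold epsS; split <;> simp_all

/-- The minimal `i`-vector with base value `b`. -/
def fidx (S : Finset (Fin k)) (b : ℕ) : ℕ → ℕ
  | 0 => b
  | n + 1 => fidx S b n + (if h : n + 1 < k then epsS S ⟨n + 1, h⟩ else 0)

/-- Generic membership predicate covering both `MemI` and `MemI'`. -/
def Mem0 (S : Finset (Fin k)) (p : Fin k → ℕ) (I : DLTuple k) : Prop :=
  I.Admissible ∧ (∀ j : Fin k, I.eps j = 1 ↔ j.rev ∈ S) ∧
    ∀ j : Fin k, I.idx j % 2 = p j % 2

lemma eps_eq_epsS {S : Finset (Fin k)} {p : Fin k → ℕ} {I : DLTuple k}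
    (hI : Mem0 S p I) : ∀ j, I.eps j = epsS S j := by
  intro j
  have h1 := hI.1.1 j
  have h2 := hI.2.1 j
  unfold epsS
  split
  · exact h2.mpr (by assumption)
  · rcases Nat.le_one_iff_eq_zero_or_eq_one.mp h1 with h | h
    · exact h
    · exact absurd (h2.mp h) (by assumption)

lemma main (hk : 1 ≤ k) (S : Finset (Fin k)) (p : Fin k → ℕ)
    (hp : ∀ (j : ℕ) (h : j + 1 < k),
      (p ⟨j, Nat.lt_of_succ_lt h⟩ + epsS S ⟨j + 1, h⟩) % 2 = p ⟨j + 1, h⟩ % 2) :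
    (∃ I, Mem0 S p I) ∧
      (∀ I J, Mem0 S p I → Mem0 S p J → Mem0 S p (dmin I J)) ∧
      (∃! L, Mem0 S p L ∧ ∀ I, Mem0 S p I → dle L I) := by
  set b : ℕ := p ⟨0, hk⟩ % 2 with hb
  set L : DLTuple k := ⟨epsS S, fun j => fidx S b j.val⟩ with hL
  have hstep : ∀ (n : ℕ) (h : n + 1 < k),
      fidx S b (n + 1) = fidx S b n + epsS S ⟨n + 1, h⟩ := by
    intro n h
    simp [fidx, dif_pos h]
  have hpar : ∀ (n : ℕ) (h : n < k), fidx S b n % 2 = p ⟨n, h⟩ % 2 := by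
    intro n
    induction n with
    | zero =>
      intro h
      have h0 : (⟨0, h⟩ : Fin k) = ⟨0, hk⟩ := rfl
      rw [h0]
      show b % 2 = p ⟨0, hk⟩ % 2
      omega
    | succ n ih =>
      intro h
      have h1 := ih (Nat.lt_of_succ_lt h)
      have h2 := hp n h
      rw [hstep n h]
      omega
  have hLmem : Mem0 S p L := by
    refine ⟨⟨fun j => epsS_le_one S j, fun j h => ?_⟩, fun j => epsS_iff S j, fun j => ?_⟩
    · show fidx S b j + epsS S ⟨j + 1, h⟩ ≤ fidx S b (j + 1) ∧
        (fidx S b j + epsS S ⟨j + 1, h⟩) % 2 = fidx S b (j + 1) % 2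
      rw [hstep j h]
      exact ⟨le_refl _, rfl⟩
    · show fidx S b j.val % 2 = p j % 2
      have := hpar j.val j.isLt
      simpa using this
  have hLle : ∀ I, Mem0 S p I → dle L I := by
    intro I hI
    have heps := eps_eq_epsS hI
    have key : ∀ (n : ℕ) (h : n < k), fidx S b n ≤ I.idx ⟨n, h⟩ := by
      intro n
      induction n with
      | zero =>
        intro h
        have h0 : (⟨0, h⟩ : Fin k) = ⟨0, hk⟩ := rfl
        rw [h0]
        have := hI.2.2 ⟨0, hk⟩
        show b ≤ I.idx ⟨0, hk⟩
        omega
      | succ n ih =>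
        intro h
        have h1 := ih (Nat.lt_of_succ_lt h)
        have h2 := (hI.1.2 n h).1
        rw [hstep n h, ← heps ⟨n + 1, h⟩]
        omega
    intro j
    have := key j.val j.isLt
    simpa using this
  refine ⟨⟨L, hLmem⟩, ?_, ?_⟩
  · rintro I J ⟨⟨hIe, hIa⟩, hIi, hIp⟩ ⟨⟨hJe, hJa⟩, hJi, hJp⟩
    refine ⟨⟨hIe, fun j h => ?_⟩, hIi, fun j => ?_⟩
    · have hI1 := hIa j h
      have hJ1 := hJa j h
      have heJ : J.eps ⟨j + 1, h⟩ = I.eps ⟨j + 1, h⟩ := by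
        rw [eps_eq_epsS ⟨⟨hJe, hJa⟩, hJi, hJp⟩, eps_eq_epsS ⟨⟨hIe, hIa⟩, hIi, hIp⟩]
      have hpI0 := hIp ⟨j, Nat.lt_of_succ_lt h⟩
      have hpJ0 := hJp ⟨j, Nat.lt_of_succ_lt h⟩
      have hpI1 := hIp ⟨j + 1, h⟩
      have hpJ1 := hJp ⟨j + 1, h⟩
      rw [heJ] at hJ1
      show min (I.idx ⟨j, Nat.lt_of_succ_lt h⟩) (J.idx ⟨j, Nat.lt_of_succ_lt h⟩) +
          I.eps ⟨j + 1, h⟩ ≤ min (I.idx ⟨j + 1, h⟩) (J.idx ⟨j + 1, h⟩) ∧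
        (min (I.idx ⟨j, Nat.lt_of_succ_lt h⟩) (J.idx ⟨j, Nat.lt_of_succ_lt h⟩) +
          I.eps ⟨j + 1, h⟩) % 2 = min (I.idx ⟨j + 1, h⟩) (J.idx ⟨j + 1, h⟩) % 2
      omega
    · have h1 := hIp j
      have h2 := hJp j
      show min (I.idx j) (J.idx j) % 2 = p j % 2
      omega
  · refine ⟨L, ⟨hLmem, hLle⟩, ?_⟩
    rintro L' ⟨hL'mem, hL'le⟩
    have h1 := hL'le L hLmem
    have h2 := hLle L' hL'mem
    obtain ⟨e', i'⟩ := L'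
    have he : e' = epsS S := funext (eps_eq_epsS hL'mem)
    have hi : i' = fun j => fidx S b j.val := by
      funext j
      exact le_antisymm (h1 j) (h2 j)
    rw [hL]
    simp [he, hi]

lemma card_succ (S : Finset (Fin k)) (j : ℕ) (h : j + 1 < k) :
    (S.filter fun s => s.val + 1 + (j + 1) ≤ k).card
      = (S.filter fun s => s.val + 1 + (j + 1 + 1) ≤ k).card + epsS S ⟨j + 1, h⟩ := by
  set x : Fin k := (⟨j + 1, h⟩ : Fin k).rev with hxdef
  have hx : x.val = k - (j + 2) := by
    rw [hxdef, Fin.val_rev]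
  have hPQ : ∀ s : Fin k, (s.val + 1 + (j + 1) ≤ k) ↔
      ((s.val + 1 + (j + 1 + 1) ≤ k) ∨ s = x) := by
    intro s
    rw [Fin.ext_iff, hx]
    have := s.isLt
    omega
  have hcongr : (S.filter fun s => s.val + 1 + (j + 1) ≤ k)
      = S.filter fun s => (s.val + 1 + (j + 1 + 1) ≤ k) ∨ s = x :=
    Finset.filter_congr (fun s _ => hPQ s)
  rw [hcongr, Finset.filter_or, Finset.card_union_of_disjoint, Finset.filter_eq']
  · have hx1 : epsS S ⟨j + 1, h⟩ = if x ∈ S then 1 else 0 := by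
      unfold epsS; rfl
    rw [hx1]
    split <;> simp
  · rw [Finset.disjoint_left]
    rintro a ha hax
    have h1 := (Finset.mem_filter.mp ha).2
    have h2 := (Finset.mem_filter.mp hax).2
    subst h2
    omega

lemma compat (S : Finset (Fin k)) (c : ℕ) (j : ℕ) (h : j + 1 < k) :
    (((S.filter fun s => s.val + 1 +
        ((⟨j, Nat.lt_of_succ_lt h⟩ : Fin k).val + 1) ≤ k).card + c) + epsS S ⟨j + 1, h⟩) % 2
      = ((S.filter fun s => s.val + 1 + ((⟨j + 1, h⟩ : Fin k).val + 1) ≤ k).card + c) % 2 := by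
  have h1 := card_succ S j h
  have h2 := epsS_le_one S ⟨j + 1, h⟩
  simp only [Fin.val_mk] at *
  omega

end DLAux

open DLTuple in
/-- `I_S[k]` and `I'_S[k]` are nonempty, closed under componentwise minimum of the
`i`-entries, and hence each has a unique least element for componentwise comparison. -/
theorem admissible_sets_nonempty_min_closed_least (k : ℕ) (hk : 1 ≤ k) (S : Finset (Fin k)) :
    ((∃ I, MemI S I) ∧
      (∀ I J, MemI S I → MemI S J → MemI S (dmin I J)) ∧
      (∃! L, MemI S L ∧ ∀ I, MemI S I → dle L I)) ∧
    ((∃ I, MemI' S I) ∧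
      (∀ I J, MemI' S I → MemI' S J → MemI' S (dmin I J)) ∧
      (∃! L, MemI' S L ∧ ∀ I, MemI' S I → dle L I)) := by
  have e1 : MemI S = DLAux.Mem0 S
      (fun j : Fin k => (S.filter fun s => s.val + 1 + (j.val + 1) ≤ k).card) := rfl
  have e2 : MemI' S = DLAux.Mem0 S
      (fun j : Fin k => (S.filter fun s => s.val + 1 + (j.val + 1) ≤ k).card + 1) := rfl
  rw [e1, e2]
  exact ⟨DLAux.main hk S _ (fun j h => by simpa using DLAux.compat S 0 j h),
    DLAux.main hk S _ (fun j h => DLAux.compat S 1 j h)⟩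
end

section
/- Fix an integer k ≥ 1 and a subset S ⊆ {1, …, k}. Then the map from ℕ^k to I'_S[k] sending (n_1, …, n_k) to the componentwise sum L'_{S,k} + ∑_{j=1}^k n_j · I_{j,k} is a bijection. -/
section Helpers
open DLTuple Finset

private lemma F_zero {k : ℕ} (hk : 1 ≤ k) (n : Fin k → ℕ) (h0 : 0 < k) :
    ∑ j : Fin k, n j * (Ijk j).idx ⟨0, h0⟩ = 2 * n ⟨k - 1, by omega⟩ := by
  rw [Finset.sum_eq_single_of_mem (⟨k - 1, by omega⟩ : Fin k) (mem_univ _)]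
  · simp only [Ijk]
    rw [if_neg (by omega)]
    ring
  · intro j _ hj
    have hj' : j.val ≠ k - 1 := fun hh => hj (Fin.ext hh)
    have := j.isLt
    simp only [Ijk]
    rw [if_pos (by omega)]
    ring

private lemma F_succ {k : ℕ} (n : Fin k → ℕ) (t : ℕ) (ht : t + 1 < k) :
    ∑ j : Fin k, n j * (Ijk j).idx ⟨t + 1, ht⟩
      = (∑ j : Fin k, n j * (Ijk j).idx ⟨t, by omega⟩) + 2 * n ⟨k - 2 - t, by omega⟩ := by
  have key : ∀ j : Fin k, n j * (Ijk j).idx ⟨t + 1, ht⟩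
      = n j * (Ijk j).idx ⟨t, by omega⟩ + (if j = ⟨k - 2 - t, by omega⟩ then 2 * n j else 0) := by
    intro j
    have hjlt := j.isLt
    by_cases h : j = (⟨k - 2 - t, by omega⟩ : Fin k)
    · have hv : j.val = k - 2 - t := by rw [h]
      rw [if_pos h]
      simp only [Ijk]
      rw [if_neg (by omega), if_pos (by omega)]
      ring
    · have hj' : j.val ≠ k - 2 - t := fun hh => h (Fin.ext hh)
      rw [if_neg h]
      simp only [Ijk]
      by_cases hc : t + 1 + j.val + 2 ≤ k
      · rw [if_pos (by omega), if_pos (by omega)]; ring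
      · rw [if_neg (by omega), if_neg (by omega)]; ring
  rw [Finset.sum_congr rfl (fun j _ => key j), Finset.sum_add_distrib,
    Finset.sum_ite_eq' Finset.univ]
  simp

private lemma F_even {k : ℕ} (n : Fin k → ℕ) (t : Fin k) :
    (∑ j : Fin k, n j * (Ijk j).idx t) % 2 = 0 := by
  have : 2 ∣ ∑ j : Fin k, n j * (Ijk j).idx t := by
    refine Finset.dvd_sum fun j _ => Dvd.dvd.mul_left ?_ _
    simp only [Ijk]
    split_ifs <;> norm_num
  omega

private lemma eps_sum_zero {k : ℕ} (n : Fin k → ℕ) (t : Fin k) :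
    ∑ j : Fin k, n j * (Ijk j).eps t = 0 := by
  simp [Ijk]

end Helpers

open DLTuple in
/-- The map `(n_1, …, n_k) ↦ L'_{S,k} + ∑_j n_j · I_{j,k}` is a bijection from `ℕ^k`
onto `I'_S[k]`, where `L'_{S,k}` is the least element of `I'_S[k]`. -/
theorem bijection_onto_I'_of_least (k : ℕ) (hk : 1 ≤ k) (S : Finset (Fin k))
    (L : DLTuple k) (hL : MemI' S L ∧ ∀ I, MemI' S I → dle L I) :
    (∀ n : Fin k → ℕ,
      MemI' S (dadd L ⟨fun t => ∑ j : Fin k, n j * (Ijk j).eps t,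
                       fun t => ∑ j : Fin k, n j * (Ijk j).idx t⟩)) ∧
    (∀ I, MemI' S I → ∃! n : Fin k → ℕ,
      dadd L ⟨fun t => ∑ j : Fin k, n j * (Ijk j).eps t,
              fun t => ∑ j : Fin k, n j * (Ijk j).idx t⟩ = I) := by
  obtain ⟨hLmem, hLmin⟩ := hL
  obtain ⟨⟨hLe1, hLadm⟩, hLeps, hLpar⟩ := hLmem
  -- L is "tight": consecutive steps are equalities
  have hstep : ∀ (t : ℕ) (ht : t + 1 < k),
      L.idx ⟨t + 1, ht⟩ = L.idx ⟨t, Nat.lt_of_succ_lt ht⟩ + L.eps ⟨t + 1, ht⟩ := by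
    intro t ht
    obtain ⟨hle, hpar⟩ := hLadm t ht
    by_contra hne
    have hgt : L.idx ⟨t, Nat.lt_of_succ_lt ht⟩ + L.eps ⟨t + 1, ht⟩ + 2 ≤ L.idx ⟨t + 1, ht⟩ := by
      omega
    have hmem2 : MemI' S ⟨L.eps, fun s => if s.val = t + 1 then L.idx s - 2 else L.idx s⟩ := by
      refine ⟨⟨hLe1, ?_⟩, hLeps, ?_⟩
      · intro s hs
        obtain ⟨hle', hpar'⟩ := hLadm s hs
        simp only []
        by_cases h1 : s = t + 1
        · subst h1
          rw [if_pos rfl, if_neg (by omega)]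
          constructor <;> omega
        · rw [if_neg (by simpa using h1)]
          by_cases h2 : s + 1 = t + 1
          · have h2' : s = t := by omega
            subst h2'
            rw [if_pos rfl]
            constructor <;> omega
          · rw [if_neg (by simpa using h2)]
            exact ⟨hle', hpar'⟩
      · intro s
        have hp := hLpar s
        simp only []
        by_cases h1 : s.val = t + 1
        · have hs2 : 2 ≤ L.idx s := by
            have : s = ⟨t + 1, ht⟩ := Fin.ext h1
            rw [this]; omega
          rw [if_pos h1]
          omega
        · rw [if_neg h1]; exact hp
    have hcon := hLmin _ hmem2 ⟨t + 1, ht⟩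
    simp only [] at hcon
    simp only [if_true] at hcon
    omega
  constructor
  · -- forward direction: every image lies in I'_S[k]
    intro n
    refine ⟨⟨?_, ?_⟩, ?_, ?_⟩
    · intro j
      simp only [dadd, eps_sum_zero]
      simpa using hLe1 j
    · intro t ht
      obtain ⟨hle, hpar⟩ := hLadm t ht
      have hs := F_succ n t ht
      have he1 := F_even n ⟨t, Nat.lt_of_succ_lt ht⟩
      have he2 := F_even n ⟨t + 1, ht⟩
      simp only [dadd, eps_sum_zero]
      constructor <;> omega
    · intro j
      simp only [dadd, eps_sum_zero]
      simpa using hLeps j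
    · intro j
      have hp := hLpar j
      have he := F_even n j
      simp only [dadd]
      omega
  · -- bijectivity onto I'_S[k]
    intro I hI
    obtain ⟨⟨hIe1, hIadm⟩, hIeps, hIpar⟩ := hI
    have heps : ∀ j : Fin k, I.eps j = L.eps j := by
      intro j
      have h1 := hIeps j
      have h2 := hLeps j
      have h3 := hIe1 j
      have h4 := hLe1 j
      by_cases h : j.rev ∈ S
      · rw [h1.mpr h, h2.mpr h]
      · have e1 : I.eps j ≠ 1 := fun hh => h (h1.mp hh)
        have e2 : L.eps j ≠ 1 := fun hh => h (h2.mp hh)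
        omega
    have hparIL : ∀ j : Fin k, I.idx j % 2 = L.idx j % 2 := fun j =>
      (hIpar j).trans (hLpar j).symm
    have hle : ∀ j, L.idx j ≤ I.idx j := hLmin I ⟨⟨hIe1, hIadm⟩, hIeps, hIpar⟩
    -- the difference function, on ℕ
    set D : ℕ → ℕ := fun s => if h : s < k then I.idx ⟨s, h⟩ - L.idx ⟨s, h⟩ else 0 with hD
    have hDval : ∀ (s : ℕ) (h : s < k), I.idx ⟨s, h⟩ = L.idx ⟨s, h⟩ + D s := by
      intro s h
      rw [hD]
      simp only [dif_pos h]
      have := hle ⟨s, h⟩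
      omega
    have hDeven : ∀ s : ℕ, D s % 2 = 0 := by
      intro s
      rw [hD]
      by_cases h : s < k
      · simp only [dif_pos h]
        have := hparIL ⟨s, h⟩
        have := hle ⟨s, h⟩
        omega
      · simp [dif_neg h]
    have hDmono : ∀ (t : ℕ) (ht : t + 1 < k), D t ≤ D (t + 1) := by
      intro t ht
      obtain ⟨hle', _⟩ := hIadm t ht
      have h1 := hstep t ht
      have h2 := hDval t (Nat.lt_of_succ_lt ht)
      have h3 := hDval (t + 1) ht
      have h4 := heps ⟨t + 1, ht⟩
      omega
    refine ⟨fun j => if j.val = k - 1 then D 0 / 2 else (D (k - 1 - j.val) - D (k - 2 - j.val)) / 2,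
      ?_, ?_⟩
    · -- the chosen n maps to I
      have key : ∀ (t : ℕ) (ht : t < k),
          (∑ j : Fin k, (if j.val = k - 1 then D 0 / 2
              else (D (k - 1 - j.val) - D (k - 2 - j.val)) / 2) * (Ijk j).idx ⟨t, ht⟩) = D t := by
        intro t
        induction t with
        | zero =>
          intro ht
          rw [F_zero hk _ ht]
          rw [if_pos (by simp)]
          have := hDeven 0
          omega
        | succ t ih =>
          intro ht
          rw [F_succ _ t ht, ih (Nat.lt_of_succ_lt ht)]
          rw [if_neg (by simp; omega)]
          rw [show k - 1 - (k - 2 - t) = t + 1 by omega, show k - 2 - (k - 2 - t) = t by omega]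
          have := hDeven t
          have := hDeven (t + 1)
          have := hDmono t ht
          omega
      have hidx : ∀ t : Fin k,
          L.idx t + (∑ j : Fin k, (if j.val = k - 1 then D 0 / 2
              else (D (k - 1 - j.val) - D (k - 2 - j.val)) / 2) * (Ijk j).idx t) = I.idx t := by
        intro t
        have h1 : (∑ j : Fin k, (if j.val = k - 1 then D 0 / 2
            else (D (k - 1 - j.val) - D (k - 2 - j.val)) / 2) * (Ijk j).idx t) = D t.val :=
          key t.val t.isLt
        have h2 := hDval t.val t.isLt
        have h3 : I.idx ⟨t.val, t.isLt⟩ = I.idx t := rfl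
        have h4 : L.idx ⟨t.val, t.isLt⟩ = L.idx t := rfl
        omega
      obtain ⟨Ieps, Iidx⟩ := I
      simp only [dadd, DLTuple.mk.injEq]
      constructor
      · funext t
        have := heps t
        simp only [eps_sum_zero] at *
        omega
      · funext t
        exact hidx t
    · -- uniqueness
      intro n' hn'
      have hidx' : ∀ t : Fin k,
          L.idx t + (∑ j : Fin k, n' j * (Ijk j).idx t) = I.idx t := by
        intro t
        have := congrArg DLTuple.idx hn'
        have h2 := congrFun this t
        simpa [dadd] using h2
      funext j
      have hjlt := j.isLt
      by_cases hj : j.val = k - 1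
      · rw [if_pos hj]
        have h1 := hidx' ⟨0, by omega⟩
        have h2 : (∑ jj : Fin k, n' jj * (Ijk jj).idx ⟨0, by omega⟩) = 2 * n' ⟨k - 1, by omega⟩ :=
          F_zero hk n' (by omega)
        have h3 := hDval 0 (by omega)
        have h4 : n' j = n' ⟨k - 1, by omega⟩ := by
          congr 1
          exact Fin.ext hj
        have h5 := hDeven 0
        omega
      · rw [if_neg hj]
        set t := k - 2 - j.val with hT
        have ht : t + 1 < k := by omega
        have h1 := hidx' ⟨t + 1, ht⟩
        have h1' := hidx' ⟨t, Nat.lt_of_succ_lt ht⟩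
        have h2 := F_succ n' t ht
        have h3 := hDval (t + 1) ht
        have h3' := hDval t (Nat.lt_of_succ_lt ht)
        have h4 : n' j = n' ⟨k - 2 - t, by omega⟩ := by
          congr 1
          refine Fin.ext ?_
          simp only []
          omega
        have h5 := hDeven t
        have h5' := hDeven (t + 1)
        have h6 := hDmono t ht
        rw [show k - 1 - j.val = t + 1 by omega]
        omega
end

section
/- Fix an integer k ≥ 1, an integer 1 ≤ ℓ ≤ k, and a subset S ⊆ {1, …, ℓ−1}. If S has even cardinality, then the map I ↦ I + L'_{{ℓ},k} (componentwise addition of tuples) is an order-preserving bijection from I_S[k] onto I'_{S ∪ {ℓ}}[k]. If S has odd cardinality, then the map I ↦ I + L'_{{ℓ},k} is an order-preserving bijection from I'_S[k] onto I_{S ∪ {ℓ}}[k]. -/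
namespace DLTuple

variable {k : ℕ}

theorem ext' {I J : DLTuple k} (h1 : ∀ j, I.eps j = J.eps j)
    (h2 : ∀ j, I.idx j = J.idx j) : I = J := by
  cases I; cases J
  simp only [mk.injEq]
  exact ⟨funext h1, funext h2⟩

/-- Common generalization of `MemI` (`a = 0`) and `MemI'` (`a = 1`). -/
def Mem (S : Finset (Fin k)) (a : ℕ) (I : DLTuple k) : Prop :=
  I.Admissible ∧ (∀ j : Fin k, I.eps j = 1 ↔ j.rev ∈ S) ∧
  ∀ j : Fin k, I.idx j % 2 = ((S.filter fun s => s.val + 1 + (j.val + 1) ≤ k).card + a) % 2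

lemma memI_iff {S : Finset (Fin k)} {I : DLTuple k} : MemI S I ↔ Mem S 0 I := by
  unfold MemI Mem; simp

lemma memI'_iff {S : Finset (Fin k)} {I : DLTuple k} : MemI' S I ↔ Mem S 1 I := Iff.rfl

lemma mem_congr {S : Finset (Fin k)} {I : DLTuple k} {a b : ℕ} (h : a % 2 = b % 2) :
    Mem S a I ↔ Mem S b I := by
  unfold Mem
  constructor <;> rintro ⟨h1, h2, h3⟩ <;> refine ⟨h1, h2, fun j => ?_⟩ <;> rw [h3 j] <;> omega

lemma card_filter_singleton (l j : Fin k) :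
    (({l} : Finset (Fin k)).filter fun s => s.val + 1 + (j.val + 1) ≤ k).card
      = if j.val + l.val + 2 ≤ k then 1 else 0 := by
  have h : (l.val + 1 + (j.val + 1) ≤ k) ↔ (j.val + l.val + 2 ≤ k) := by omega
  rw [Finset.filter_singleton]
  by_cases hc : j.val + l.val + 2 ≤ k
  · rw [if_pos (h.mpr hc), if_pos hc, Finset.card_singleton]
  · rw [if_neg (fun hp => hc (h.mp hp)), if_neg hc, Finset.card_empty]

lemma card_filter_insert {l : Fin k} {S : Finset (Fin k)} (hl : l ∉ S) (j : Fin k) :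
    ((insert l S).filter fun s => s.val + 1 + (j.val + 1) ≤ k).card
      = (S.filter fun s => s.val + 1 + (j.val + 1) ≤ k).card
        + if j.val + l.val + 2 ≤ k then 1 else 0 := by
  have h : (l.val + 1 + (j.val + 1) ≤ k) ↔ (j.val + l.val + 2 ≤ k) := by omega
  rw [Finset.filter_insert]
  by_cases hc : j.val + l.val + 2 ≤ k
  · rw [if_pos (h.mpr hc), if_pos hc,
      Finset.card_insert_of_notMem (fun hm => hl (Finset.mem_of_mem_filter _ hm))]
  · rw [if_neg (fun hp => hc (h.mp hp)), if_neg hc]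
    omega

/-- The explicit least element of `I'_{{l}}[k]`. -/
def L0 (l : Fin k) : DLTuple k :=
  ⟨fun j => if j = l.rev then 1 else 0, fun j => if j.val + l.val + 2 ≤ k then 0 else 1⟩

lemma L0_mem (l : Fin k) : MemI' {l} (L0 l) := by
  have hrev : ∀ j : Fin k, j.rev = l ↔ j = l.rev := fun j =>
    ⟨fun h => by rw [← h, Fin.rev_rev], fun h => by rw [h, Fin.rev_rev]⟩
  have hl := l.isLt
  refine ⟨⟨fun j => ?_, fun j hj => ?_⟩, fun j => ?_, fun j => ?_⟩
  · simp only [L0]; split_ifs <;> omega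
  · simp only [L0, Fin.ext_iff, Fin.val_rev]
    split_ifs <;> omega
  · simp only [L0, Finset.mem_singleton]
    rw [show (j.rev = l) = (j = l.rev) from propext (hrev j)] at *
    split_ifs with h <;> simp [h]
  · rw [card_filter_singleton]
    simp only [L0]
    split_ifs <;> omega

lemma L1_eps (l : Fin k) {L1 : DLTuple k}
    (h : MemI' {l} L1 ∧ ∀ I, MemI' {l} I → dle L1 I) (j : Fin k) :
    L1.eps j = if j = l.rev then 1 else 0 := by
  have hrev : j.rev = l ↔ j = l.rev :=
    ⟨fun h => by rw [← h, Fin.rev_rev], fun h => by rw [h, Fin.rev_rev]⟩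
  have h1 := h.1.2.1 j
  have h2 := h.1.1.1 j
  simp only [Finset.mem_singleton] at h1
  split_ifs with hj
  · exact h1.mpr (hrev.mpr hj)
  · have hne : L1.eps j ≠ 1 := fun hx => hj (hrev.mp (h1.mp hx))
    omega

lemma L1_idx (l : Fin k) {L1 : DLTuple k}
    (h : MemI' {l} L1 ∧ ∀ I, MemI' {l} I → dle L1 I) (j : Fin k) :
    L1.idx j = if j.val + l.val + 2 ≤ k then 0 else 1 := by
  have hub : L1.idx j ≤ (L0 l).idx j := h.2 (L0 l) (L0_mem l) j
  have hp := h.1.2.2 j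
  rw [card_filter_singleton] at hp
  simp only [L0] at hub
  split_ifs at hp hub ⊢ <;> omega

lemma L1_step {l : Fin k} {L1 : DLTuple k}
    (he : ∀ j, L1.eps j = if j = l.rev then 1 else 0)
    (hi : ∀ j, L1.idx j = if j.val + l.val + 2 ≤ k then 0 else 1)
    (j : ℕ) (hj : j + 1 < k) :
    L1.idx ⟨j, Nat.lt_of_succ_lt hj⟩ + L1.eps ⟨j + 1, hj⟩ = L1.idx ⟨j + 1, hj⟩ := by
  have hl := l.isLt
  rw [he, hi, hi]
  simp only [Fin.ext_iff, Fin.val_rev]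
  split_ifs <;> omega

lemma mem_dadd {l : Fin k} {S : Finset (Fin k)} (hS : ∀ s ∈ S, s.val < l.val)
    {L1 : DLTuple k} (he : ∀ j, L1.eps j = if j = l.rev then 1 else 0)
    (hi : ∀ j, L1.idx j = if j.val + l.val + 2 ≤ k then 0 else 1)
    (a : ℕ) (I : DLTuple k) (hI : Mem S a I) :
    Mem (insert l S) (a + 1) (dadd I L1) := by
  obtain ⟨⟨hIe1, hIc⟩, hIe, hIp⟩ := hI
  have hlS : l ∉ S := fun h => lt_irrefl _ (hS l h)
  have hrev : ∀ j : Fin k, j.rev = l ↔ j = l.rev := fun j =>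
    ⟨fun h => by rw [← h, Fin.rev_rev], fun h => by rw [h, Fin.rev_rev]⟩
  refine ⟨⟨fun j => ?_, fun j hj => ?_⟩, fun j => ?_, fun j => ?_⟩
  · simp only [dadd, he]
    rcases eq_or_ne j l.rev with hj | hj
    · have h1 : j.rev ∉ S := ((hrev j).mpr hj) ▸ hlS
      have h3 : I.eps j ≠ 1 := fun hx => h1 ((hIe j).mp hx)
      have h4 := hIe1 j
      rw [if_pos hj]; omega
    · rw [if_neg hj]
      have := hIe1 j; omega
  · have c1 := hIc j hj
    have c2 := L1_step he hi j hj
    simp only [dadd]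
    omega
  · simp only [dadd, he, Finset.mem_insert]
    rcases eq_or_ne j l.rev with hj | hj
    · have hjl : j.rev = l := (hrev j).mpr hj
      have h1 : j.rev ∉ S := hjl ▸ hlS
      have h3 : I.eps j ≠ 1 := fun hx => h1 ((hIe j).mp hx)
      have h4 := hIe1 j
      have h5 : I.eps j = 0 := by omega
      rw [if_pos hj, h5]
      simp [hjl]
    · have h2 : j.rev ≠ l := fun hx => hj ((hrev j).mp hx)
      rw [if_neg hj]
      simp [hIe j, h2]
  · simp only [dadd]
    rw [card_filter_insert hlS, hi]
    have hp := hIp j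
    split_ifs with hc <;> omega

lemma one_le_idx {l : Fin k} {S : Finset (Fin k)} (hS : ∀ s ∈ S, s.val < l.val)
    {a : ℕ} (hA : S.card % 2 = a % 2) {I' : DLTuple k}
    (hI' : Mem (insert l S) (a + 1) I') :
    ∀ (n : ℕ) (j : Fin k), j.val + l.val + 2 = k + 1 + n → 1 ≤ I'.idx j := by
  have hlS : l ∉ S := fun h => lt_irrefl _ (hS l h)
  have hl := l.isLt
  intro n
  induction n with
  | zero =>
    intro j hj
    have hp := hI'.2.2 j
    rw [card_filter_insert hlS, if_neg (by omega)] at hp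
    have hfl : S.filter (fun s => s.val + 1 + (j.val + 1) ≤ k) = S :=
      Finset.filter_true_of_mem (fun s hs => by have := hS s hs; omega)
    rw [hfl] at hp
    omega
  | succ m ih =>
    intro j hj
    have h1 : 1 ≤ j.val := by omega
    have hjk := j.isLt
    have hc := hI'.1.2 (j.val - 1) (by omega)
    have hj' : (⟨j.val - 1 + 1, by omega⟩ : Fin k) = j := by
      apply Fin.ext; simp; omega
    rw [hj'] at hc
    have h2 := ih ⟨j.val - 1, by omega⟩ (by simp; omega)
    omega

lemma exists_unique_pre {l : Fin k} {S : Finset (Fin k)} (hS : ∀ s ∈ S, s.val < l.val)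
    {L1 : DLTuple k} (he : ∀ j, L1.eps j = if j = l.rev then 1 else 0)
    (hi : ∀ j, L1.idx j = if j.val + l.val + 2 ≤ k then 0 else 1)
    (a : ℕ) (hA : S.card % 2 = a % 2)
    (I' : DLTuple k) (hI' : Mem (insert l S) (a + 1) I') :
    ∃! I, Mem S a I ∧ dadd I L1 = I' := by
  have hlS : l ∉ S := fun h => lt_irrefl _ (hS l h)
  have hl := l.isLt
  have hrev : ∀ j : Fin k, j.rev = l ↔ j = l.rev := fun j =>
    ⟨fun h => by rw [← h, Fin.rev_rev], fun h => by rw [h, Fin.rev_rev]⟩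
  have hgee : ∀ j, L1.eps j ≤ I'.eps j := by
    intro j; rw [he]
    rcases eq_or_ne j l.rev with hj | hj
    · rw [if_pos hj]
      have h1 : I'.eps j = 1 := (hI'.2.1 j).mpr
        (by rw [(hrev j).mpr hj]; exact Finset.mem_insert_self l S)
      omega
    · rw [if_neg hj]; omega
  have hgei : ∀ j, L1.idx j ≤ I'.idx j := by
    intro j; rw [hi]
    split_ifs with hc
    · omega
    · have hjk := j.isLt
      exact one_le_idx hS hA hI' (j.val + l.val + 2 - (k + 1)) j (by omega)
  refine ⟨⟨fun j => I'.eps j - L1.eps j, fun j => I'.idx j - L1.idx j⟩,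
    ⟨⟨⟨fun j => ?_, fun j hj => ?_⟩, fun j => ?_, fun j => ?_⟩, ?_⟩, fun y hy => ?_⟩
  · have := hI'.1.1 j
    dsimp only
    omega
  · have hcI := hI'.1.2 j hj
    have hstep := L1_step he hi j hj
    have ha := hgei ⟨j, Nat.lt_of_succ_lt hj⟩
    have hb := hgee ⟨j + 1, hj⟩
    have hcc := hgei ⟨j + 1, hj⟩
    dsimp only
    omega
  · dsimp only
    rw [he]
    rcases eq_or_ne j l.rev with hj | hj
    · have hjl : j.rev = l := (hrev j).mpr hj
      have h1 : I'.eps j = 1 := (hI'.2.1 j).mpr (by rw [hjl]; exact Finset.mem_insert_self l S)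
      have h2 : j.rev ∉ S := hjl ▸ hlS
      rw [if_pos hj]
      simp [h1, h2]
    · have h2 : j.rev ≠ l := fun hx => hj ((hrev j).mp hx)
      rw [if_neg hj, Nat.sub_zero, hI'.2.1 j, Finset.mem_insert]
      simp [h2]
  · dsimp only
    have hp := hI'.2.2 j
    rw [card_filter_insert hlS] at hp
    have hb := hgei j
    rw [hi] at hb ⊢
    split_ifs at hp hb ⊢ with hc <;> omega
  · refine ext' (fun j => ?_) (fun j => ?_) <;> dsimp only [dadd]
    · exact Nat.sub_add_cancel (hgee j)
    · exact Nat.sub_add_cancel (hgei j)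
  · refine ext' (fun j => ?_) (fun j => ?_) <;> dsimp only
    · have h1 : (dadd y L1).eps j = I'.eps j := by rw [hy.2]
      simp only [dadd] at h1
      omega
    · have h1 : (dadd y L1).idx j = I'.idx j := by rw [hy.2]
      simp only [dadd] at h1
      omega

end DLTuple

open DLTuple in
/-- For `ℓ ∈ {1,…,k}` and `S ⊆ {1,…,ℓ−1}`: if `|S|` is even, then `I ↦ I + L'_{{ℓ},k}` is an
order-preserving bijection `I_S[k] → I'_{S∪{ℓ}}[k]`; if `|S|` is odd, it is an
order-preserving bijection `I'_S[k] → I_{S∪{ℓ}}[k]`.  Here `l : Fin k` encodes `ℓ = l + 1`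
and `L1` is the least element of `I'_{{ℓ}}[k]`. -/
theorem add_least_single_order_bijection (k : ℕ) (hk : 1 ≤ k) (l : Fin k)
    (S : Finset (Fin k)) (hS : ∀ s ∈ S, s.val < l.val)
    (L1 : DLTuple k) (hL1 : MemI' {l} L1 ∧ ∀ I, MemI' {l} I → dle L1 I) :
    (Even S.card →
      (∀ I, MemI S I → MemI' (insert l S) (dadd I L1)) ∧
      (∀ I J, MemI S I → MemI S J → dle I J → dle (dadd I L1) (dadd J L1)) ∧
      (∀ I', MemI' (insert l S) I' → ∃! I, MemI S I ∧ dadd I L1 = I')) ∧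
    (Odd S.card →
      (∀ I, MemI' S I → MemI (insert l S) (dadd I L1)) ∧
      (∀ I J, MemI' S I → MemI' S J → dle I J → dle (dadd I L1) (dadd J L1)) ∧
      (∀ I', MemI (insert l S) I' → ∃! I, MemI' S I ∧ dadd I L1 = I')) := by
  have he : ∀ j, L1.eps j = if j = l.rev then 1 else 0 := L1_eps l hL1
  have hi : ∀ j, L1.idx j = if j.val + l.val + 2 ≤ k then 0 else 1 := L1_idx l hL1
  have hmono : ∀ I J : DLTuple k, dle I J → dle (dadd I L1) (dadd J L1) := by
    intro I J hIJ j
    simp only [dadd]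
    exact Nat.add_le_add_right (hIJ j) _
  constructor
  · intro hev
    have hA : S.card % 2 = 0 % 2 := by
      have := Nat.even_iff.mp hev; omega
    refine ⟨?_, fun I J _ _ h => hmono I J h, ?_⟩
    · intro I hI
      exact memI'_iff.mpr (mem_dadd hS he hi 0 I (memI_iff.mp hI))
    · intro I' hI'
      obtain ⟨I, ⟨hm, heq⟩, huniq⟩ :=
        exists_unique_pre hS he hi 0 hA I' (memI'_iff.mp hI')
      exact ⟨I, ⟨memI_iff.mpr hm, heq⟩, fun y hy => huniq y ⟨memI_iff.mp hy.1, hy.2⟩⟩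
  · intro hodd
    have hA : S.card % 2 = 1 % 2 := by
      have := Nat.odd_iff.mp hodd; omega
    refine ⟨?_, fun I J _ _ h => hmono I J h, ?_⟩
    · intro I hI
      have h2 := mem_dadd hS he hi 1 I (memI'_iff.mp hI)
      exact memI_iff.mpr ((mem_congr (by norm_num)).mp h2)
    · intro I' hI'
      have h3 : Mem (insert l S) (1 + 1) I' :=
        (mem_congr (by norm_num : (0 : ℕ) % 2 = (1 + 1) % 2)).mp (memI_iff.mp hI')
      obtain ⟨I, ⟨hm, heq⟩, huniq⟩ := exists_unique_pre hS he hi 1 hA I' h3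
      exact ⟨I, ⟨memI'_iff.mpr hm, heq⟩, fun y hy => huniq y ⟨memI'_iff.mp hy.1, hy.2⟩⟩
end

section
/- Fix an integer k ≥ 2 and let τ be a k-cycle in the symmetric group on {1, …, k}. Then the map τ̄ : {1, …, 2^k} → {1, …, 2^k} defined by τ̄(i) = 2^k − ∑_{j=0}^{k−1} 2^j · ν_{τ(j+1)−1}(2^k − i) is a permutation of {1, …, 2^k} of order exactly k, and its fixed points are exactly the two elements 1 and 2^k. -/
/-- `ν_j(a)`: the coefficient of `2^j` in the binary expansion of `a`. -/
def nuBit (j a : ℕ) : ℕ := a / 2 ^ j % 2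

/-- The map `τ̄(i) = 2^k − ∑_{j=0}^{k−1} 2^j · ν_{τ(j+1)−1}(2^k − i)` on `{1, …, 2^k}`,
where the permutation `τ` of `{1, …, k}` is encoded `0`-based as `τ : Equiv.Perm (Fin k)`. -/
def tauBar {k : ℕ} (τ : Equiv.Perm (Fin k)) (i : ℕ) : ℕ :=
  2 ^ k - ∑ j : Fin k, 2 ^ j.val * nuBit (τ j).val (2 ^ k - i)

private lemma sum_two_pow (k : ℕ) : ∑ j : Fin k, 2 ^ (j : ℕ) = 2 ^ k - 1 := by
  induction k with
  | zero => simp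
  | succ n ih =>
    rw [Fin.sum_univ_castSucc]
    simp only [Fin.coe_castSucc, Fin.val_last, ih, pow_succ]
    have : 1 ≤ 2 ^ n := Nat.one_le_two_pow
    omega

private lemma nuBit_compl : ∀ j k x : ℕ, j < k → x < 2 ^ k →
    nuBit j x + nuBit j (2 ^ k - 1 - x) = 1 := by
  intro j
  induction j with
  | zero =>
    intro k x hj hx
    obtain ⟨k', rfl⟩ : ∃ k', k = k' + 1 := ⟨k - 1, by omega⟩
    have h2 : 2 ^ (k' + 1) = 2 * 2 ^ k' := by rw [pow_succ]; ring
    simp only [nuBit, pow_zero, Nat.div_one]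
    omega
  | succ j ih =>
    intro k x hj hx
    obtain ⟨k', rfl⟩ : ∃ k', k = k' + 1 := ⟨k - 1, by omega⟩
    have h2 : 2 ^ (k' + 1) = 2 * 2 ^ k' := by rw [pow_succ]; ring
    have hdiv : ∀ a : ℕ, nuBit (j + 1) a = nuBit j (a / 2) := by
      intro a
      simp only [nuBit]
      rw [pow_succ', Nat.div_div_eq_div_mul]
    rw [hdiv, hdiv]
    have hc : (2 ^ (k' + 1) - 1 - x) / 2 = 2 ^ k' - 1 - x / 2 := by omega
    rw [hc]
    exact ih k' (x / 2) (by omega) (by omega)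

private def bitPerm {k : ℕ} (τ : Equiv.Perm (Fin k)) : Equiv.Perm (Fin (2 ^ k)) :=
  (finFunctionFinEquiv.symm.trans (Equiv.arrowCongr τ.symm (Equiv.refl (Fin 2)))).trans
    finFunctionFinEquiv

private lemma bitPerm_apply {k : ℕ} (τ : Equiv.Perm (Fin k)) (x : Fin (2 ^ k)) :
    bitPerm τ x = finFunctionFinEquiv (fun j => finFunctionFinEquiv.symm x (τ j)) := rfl

private lemma bitPerm_mul {k : ℕ} (τ₁ τ₂ : Equiv.Perm (Fin k)) :
    bitPerm τ₁ * bitPerm τ₂ = bitPerm (τ₂ * τ₁) := by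
  ext x
  simp [bitPerm_apply, Equiv.Perm.mul_apply, Equiv.symm_apply_apply]

private lemma bitPerm_one {k : ℕ} : bitPerm (1 : Equiv.Perm (Fin k)) = 1 := by
  ext x
  simp [bitPerm_apply]

private lemma bitPerm_pow {k : ℕ} (τ : Equiv.Perm (Fin k)) (n : ℕ) :
    (bitPerm τ) ^ n = bitPerm (τ ^ n) := by
  induction n with
  | zero => simp [bitPerm_one]
  | succ n ih =>
    rw [pow_succ, ih, bitPerm_mul, ← pow_succ']

private lemma bitPerm_eq_one_iff {k : ℕ} (π : Equiv.Perm (Fin k)) :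
    bitPerm π = 1 ↔ π = 1 := by
  constructor
  · intro h
    apply Equiv.ext
    intro i
    show π i = i
    set g : Fin k → Fin 2 := fun m => if m = i then 1 else 0 with hg
    have h1 : bitPerm π (finFunctionFinEquiv g) = finFunctionFinEquiv g := by rw [h]; rfl
    rw [bitPerm_apply, Equiv.symm_apply_apply] at h1
    have h2 : (fun j => g (π j)) = g := finFunctionFinEquiv.injective h1
    have h3 : g (π i) = g i := congrFun h2 i
    simp only [hg, if_pos rfl] at h3
    by_contra hne
    rw [if_neg hne] at h3
    exact absurd h3 (by decide)
  · rintro rfl; exact bitPerm_one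

/-- For a `k`-cycle `τ` (`k ≥ 2`), the map `τ̄` is a permutation of `{1, …, 2^k}` of order
exactly `k` whose fixed points are exactly `1` and `2^k`.  We encode `{1, …, 2^k}` as
`Fin (2^k)` via `x ↦ x + 1`. -/
theorem tauBar_perm_order_fixedPoints (k : ℕ) (hk : 2 ≤ k)
    (τ : Equiv.Perm (Fin k)) (hτ : τ.IsCycle ∧ τ.support.card = k) :
    ∃ σ : Equiv.Perm (Fin (2 ^ k)),
      (∀ x : Fin (2 ^ k), (σ x).val + 1 = tauBar τ (x.val + 1)) ∧
      orderOf σ = k ∧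
      ∀ x : Fin (2 ^ k), σ x = x ↔ (x.val + 1 = 1 ∨ x.val + 1 = 2 ^ k) := by
  have h2k : 1 ≤ 2 ^ k := Nat.one_le_two_pow
  have h2k' : 2 ≤ 2 ^ k := Nat.one_lt_two_pow_iff.mpr (by omega)
  have hordτ : orderOf τ = k := by rw [hτ.1.orderOf, hτ.2]
  have hτk : τ ^ k = 1 := orderOf_dvd_iff_pow_eq_one.mp (dvd_of_eq hordτ)
  refine ⟨bitPerm τ, ?_, ?_, ?_⟩
  · -- the value formula
    intro x
    have hval : ((bitPerm τ x : Fin (2 ^ k)) : ℕ)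
        = ∑ j : Fin k, 2 ^ (j : ℕ) * nuBit (τ j).val x.val := by
      rw [bitPerm_apply, finFunctionFinEquiv_apply]
      exact Finset.sum_congr rfl fun j _ => mul_comm _ _
    have hy : 2 ^ k - (x.val + 1) = 2 ^ k - 1 - x.val := by omega
    have hsum : (∑ j : Fin k, 2 ^ (j : ℕ) * nuBit (τ j).val (2 ^ k - 1 - x.val))
        + ∑ j : Fin k, 2 ^ (j : ℕ) * nuBit (τ j).val x.val = 2 ^ k - 1 := by
      rw [← Finset.sum_add_distrib]
      have hterm : ∀ j : Fin k,
          2 ^ (j : ℕ) * nuBit (τ j).val (2 ^ k - 1 - x.val)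
            + 2 ^ (j : ℕ) * nuBit (τ j).val x.val = 2 ^ (j : ℕ) := by
        intro j
        have hc := nuBit_compl (τ j).val k x.val (τ j).isLt x.isLt
        rw [← Nat.mul_add, Nat.add_comm, hc, Nat.mul_one]
      calc (∑ j : Fin k, (2 ^ (j : ℕ) * nuBit (τ j).val (2 ^ k - 1 - x.val)
              + 2 ^ (j : ℕ) * nuBit (τ j).val x.val))
          = ∑ j : Fin k, 2 ^ (j : ℕ) := Finset.sum_congr rfl fun j _ => hterm j
        _ = 2 ^ k - 1 := sum_two_pow k
    have hlt : ((bitPerm τ x : Fin (2 ^ k)) : ℕ) < 2 ^ k := (bitPerm τ x).isLt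
    unfold tauBar
    rw [hy]
    omega
  · -- order
    refine Nat.dvd_antisymm ?_ ?_
    · apply orderOf_dvd_of_pow_eq_one
      rw [bitPerm_pow, hτk, bitPerm_one]
    · have h1 : (bitPerm τ) ^ orderOf (bitPerm τ) = 1 := pow_orderOf_eq_one _
      rw [bitPerm_pow] at h1
      have h2 : τ ^ orderOf (bitPerm τ) = 1 := (bitPerm_eq_one_iff _).mp h1
      exact (dvd_of_eq hordτ.symm).trans (orderOf_dvd_of_pow_eq_one h2)
  · -- fixed points
    intro x
    have hmove : ∀ a : Fin k, τ a ≠ a := by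
      intro a
      have hsupp : τ.support = Finset.univ :=
        Finset.eq_univ_of_card _ (by rw [hτ.2, Fintype.card_fin])
      exact Equiv.Perm.mem_support.mp (hsupp ▸ Finset.mem_univ a)
    have hxval : (x : ℕ)
        = ∑ j : Fin k, ((finFunctionFinEquiv.symm x j : Fin 2) : ℕ) * 2 ^ (j : ℕ) := by
      conv_lhs => rw [← Equiv.apply_symm_apply finFunctionFinEquiv x]
      rw [finFunctionFinEquiv_apply]
    have hfix : bitPerm τ x = x ↔
        (fun j => finFunctionFinEquiv.symm x (τ j)) = finFunctionFinEquiv.symm x := by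
      rw [bitPerm_apply]
      constructor
      · intro h
        have := congrArg (finFunctionFinEquiv.symm) h
        rw [Equiv.symm_apply_apply] at this
        exact this
      · intro h
        rw [h, Equiv.apply_symm_apply]
    constructor
    · intro h
      rw [hfix] at h
      have hstep : ∀ j, finFunctionFinEquiv.symm x (τ j) = finFunctionFinEquiv.symm x j :=
        fun j => congrFun h j
      have hpow : ∀ n : ℕ, ∀ j, finFunctionFinEquiv.symm x ((τ ^ n) j)
          = finFunctionFinEquiv.symm x j := by
        intro n
        induction n with
        | zero => simp
        | succ n ih =>
          intro j
          rw [pow_succ, Equiv.Perm.mul_apply, ih, hstep]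
      have hi0 : (0 : ℕ) < k := by omega
      set i0 : Fin k := ⟨0, hi0⟩
      have hconst : ∀ i : Fin k, finFunctionFinEquiv.symm x i = finFunctionFinEquiv.symm x i0 := by
        intro i
        obtain ⟨n, hn⟩ := hτ.1.exists_pow_eq (hmove i) (hmove i0)
        rw [← hn, hpow]
      have hx2 : (x : ℕ) = ((finFunctionFinEquiv.symm x i0 : Fin 2) : ℕ) * (2 ^ k - 1) := by
        rw [hxval, ← sum_two_pow k, Finset.mul_sum]
        exact Finset.sum_congr rfl fun j _ => by rw [hconst j]
      have hlt2 : ((finFunctionFinEquiv.symm x i0 : Fin 2) : ℕ) < 2 :=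
        (finFunctionFinEquiv.symm x i0).isLt
      interval_cases h' : ((finFunctionFinEquiv.symm x i0 : Fin 2) : ℕ) <;> omega
    · intro h
      rw [hfix]
      have hbit : ∀ j : Fin k, ((finFunctionFinEquiv.symm x j : Fin 2) : ℕ)
          = if (x : ℕ) = 0 then 0 else 1 := by
        intro j
        have hrfl : ((finFunctionFinEquiv.symm x j : Fin 2) : ℕ) = nuBit j.val x.val := rfl
        rcases h with h | h
        · have hx0 : (x : ℕ) = 0 := by omega
          rw [if_pos hx0, hrfl, hx0]
          simp [nuBit]
        · have hxv : (x : ℕ) = 2 ^ k - 1 := by omega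
          have hnz : ¬ ((x : ℕ) = 0) := by omega
          have h0 : nuBit j.val 0 = 0 := by simp [nuBit]
          have h1 : nuBit j.val (2 ^ k - 1) = 1 := by
            have hc := nuBit_compl j.val k 0 j.isLt (by omega)
            rw [Nat.sub_zero, h0] at hc
            omega
          rw [if_neg hnz, hrfl, hxv]
          exact h1
      funext j
      apply Fin.ext
      show ((finFunctionFinEquiv.symm x (τ j) : Fin 2) : ℕ) = _
      rw [hbit (τ j), hbit j]
end

section
/- Fix integers k ≥ 2, n, N ∈ ℕ, and let τ be a k-cycle in the symmetric group on {1, …, k}, with σ = τ̄ the associated permutation of {1, …, 2^k}. Let A_{n,k,N} be the set of 2^k-tuples (a_1, …, a_{2^k}) of natural numbers satisfying ∑_{i=1}^{2^k} a_i · ν_j(2^k − i) = n for every 0 ≤ j ≤ k−1, and ∑_{i=1}^{2^k} a_i = n + N. Then the action of σ on 2^k-tuples by permutation of the coordinates maps A_{n,k,N} bijectively onto itself. -/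
/-- Membership in `A_{n,k,N}`: the `2^k`-tuple `(a_1, …, a_{2^k})` (indexed by
`i : Fin (2^k)` encoding `i + 1`) satisfies `∑_i a_i ν_j(2^k − i) = n` for all
`0 ≤ j ≤ k−1` and `∑_i a_i = n + N`. -/
def MemA (n k N : ℕ) (a : Fin (2 ^ k) → ℕ) : Prop :=
  (∀ j : Fin k, ∑ i : Fin (2 ^ k), a i * nuBit j.val (2 ^ k - (i.val + 1)) = n) ∧
  ∑ i : Fin (2 ^ k), a i = n + N

lemma nuBit_le_one (j a : ℕ) : nuBit j a ≤ 1 := by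
  have := Nat.mod_lt (a / 2 ^ j) (show 0 < 2 by norm_num)
  unfold nuBit; omega

lemma sum_two_pow_s15 (n : ℕ) : ∑ i ∈ Finset.range n, 2 ^ i = 2 ^ n - 1 := by
  induction n with
  | zero => simp
  | succ n ih =>
    rw [Finset.sum_range_succ, ih, pow_succ]
    have : 1 ≤ 2 ^ n := Nat.one_le_two_pow
    omega

lemma digit_sum (k : ℕ) (f : ℕ → ℕ) (hf : ∀ i, f i ≤ 1) (j : ℕ) (hj : j < k) :
    (∑ i ∈ Finset.range k, 2 ^ i * f i) / 2 ^ j % 2 = f j := by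
  have hsplit : ∑ i ∈ Finset.range k, 2 ^ i * f i
      = (∑ i ∈ Finset.range j, 2 ^ i * f i) + 2 ^ j *
        (f j + 2 * ∑ i ∈ Finset.range (k - (j + 1)), 2 ^ i * f (j + 1 + i)) := by
    rw [← Finset.sum_range_add_sum_Ico _ (Nat.succ_le_of_lt hj), Finset.sum_range_succ,
      Finset.sum_Ico_eq_sum_range]
    have : ∀ i, 2 ^ (j + 1 + i) * f (j + 1 + i) = 2 ^ j * (2 * (2 ^ i * f (j + 1 + i))) := by
      intro i; rw [pow_add, pow_succ]; ring
    rw [Finset.sum_congr rfl (fun i _ => this i)]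
    simp only [← Finset.mul_sum, Nat.succ_eq_add_one]
    ring
  have hA : (∑ i ∈ Finset.range j, 2 ^ i * f i) < 2 ^ j := by
    have h1 : (∑ i ∈ Finset.range j, 2 ^ i * f i) ≤ ∑ i ∈ Finset.range j, 2 ^ i :=
      Finset.sum_le_sum fun i _ => by
        have := hf i; nlinarith [Nat.one_le_two_pow (n := i)]
    have := sum_two_pow_s15 j
    have : 1 ≤ 2 ^ j := Nat.one_le_two_pow
    omega
  rw [hsplit, Nat.add_mul_div_left _ _ (Nat.two_pow_pos j),
    Nat.div_eq_of_lt hA, zero_add, Nat.add_mul_mod_self_left]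
  have := hf j; omega

lemma step {k : ℕ} (τ : Equiv.Perm (Fin k)) (σ : Equiv.Perm (Fin (2 ^ k)))
    (hσ : ∀ x : Fin (2 ^ k), (σ x).val + 1 = tauBar τ (x.val + 1))
    (x : Fin (2 ^ k)) (j : Fin k) :
    nuBit j.val (2 ^ k - ((σ x).val + 1)) = nuBit (τ j).val (2 ^ k - (x.val + 1)) := by
  have hk0 : 0 < k := j.pos
  set m := 2 ^ k - (x.val + 1) with hm
  set f : ℕ → ℕ := fun i => nuBit (τ ⟨i % k, Nat.mod_lt i hk0⟩).val m with hfdef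
  have hfeq : ∀ j' : Fin k, f j'.val = nuBit (τ j').val m := by
    intro j'
    simp only [hfdef]
    have h : (⟨j'.val % k, Nat.mod_lt _ hk0⟩ : Fin k) = j' := Fin.ext (Nat.mod_eq_of_lt j'.isLt)
    rw [h]
  have hsum : (∑ j' : Fin k, 2 ^ j'.val * nuBit (τ j').val m)
      = ∑ i ∈ Finset.range k, 2 ^ i * f i := by
    rw [← Fin.sum_univ_eq_sum_range (fun i => 2 ^ i * f i) k]
    exact Finset.sum_congr rfl fun j' _ => by rw [hfeq]
  have hS : (∑ j' : Fin k, 2 ^ j'.val * nuBit (τ j').val m) ≤ 2 ^ k - 1 := by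
    calc (∑ j' : Fin k, 2 ^ j'.val * nuBit (τ j').val m)
        ≤ ∑ j' : Fin k, 2 ^ j'.val := Finset.sum_le_sum fun j' _ => by
          have := nuBit_le_one (τ j').val m
          nlinarith [Nat.one_le_two_pow (n := j'.val)]
      _ = 2 ^ k - 1 := by
          rw [Fin.sum_univ_eq_sum_range (fun i => 2 ^ i) k]; exact sum_two_pow_s15 k
  have h1 : 2 ^ k - ((σ x).val + 1) = ∑ j' : Fin k, 2 ^ j'.val * nuBit (τ j').val m := by
    have hx := hσ x
    unfold tauBar at hx
    rw [← hm] at hx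
    have : 1 ≤ 2 ^ k := Nat.one_le_two_pow
    omega
  rw [h1, hsum, ← hfeq j]
  exact digit_sum k f (fun i => nuBit_le_one _ _) j.val j.isLt

/-- For a `k`-cycle `τ` (`k ≥ 2`) with associated permutation `σ = τ̄` of `{1, …, 2^k}`,
the action of `σ` on `2^k`-tuples by permutation of coordinates maps `A_{n,k,N}`
bijectively onto itself. -/
theorem sigma_maps_A_onto_itself (n N k : ℕ) (hk : 2 ≤ k)
    (τ : Equiv.Perm (Fin k)) (hτ : τ.IsCycle ∧ τ.support.card = k)
    (σ : Equiv.Perm (Fin (2 ^ k)))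
    (hσ : ∀ x : Fin (2 ^ k), (σ x).val + 1 = tauBar τ (x.val + 1)) :
    ∀ a : Fin (2 ^ k) → ℕ, MemA n k N a ↔ MemA n k N (a ∘ ⇑σ) := by
  intro a
  have hperj : ∀ j : Fin k,
      (∑ i : Fin (2 ^ k), (a ∘ ⇑σ) i * nuBit j.val (2 ^ k - (i.val + 1)))
      = ∑ i : Fin (2 ^ k), a i * nuBit (τ⁻¹ j).val (2 ^ k - (i.val + 1)) := by
    intro j
    have h1 : ∀ x : Fin (2 ^ k),
        (a ∘ ⇑σ) x * nuBit j.val (2 ^ k - (x.val + 1))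
        = a (σ x) * nuBit (τ⁻¹ j).val (2 ^ k - ((σ x).val + 1)) := by
      intro x
      have := step τ σ hσ x (τ⁻¹ j)
      rw [Equiv.Perm.coe_inv, Equiv.apply_symm_apply] at this
      simp [this]
    rw [Finset.sum_congr rfl fun x _ => h1 x]
    exact Equiv.sum_comp σ (fun y => a y * nuBit (τ⁻¹ j).val (2 ^ k - (y.val + 1)))
  have htot : (∑ i : Fin (2 ^ k), (a ∘ ⇑σ) i) = ∑ i : Fin (2 ^ k), a i :=
    Equiv.sum_comp σ a
  constructor
  · rintro ⟨h1, h2⟩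
    refine ⟨fun j => ?_, by rw [htot]; exact h2⟩
    rw [hperj j]; exact h1 (τ⁻¹ j)
  · rintro ⟨h1, h2⟩
    refine ⟨fun j => ?_, by rw [← htot]; exact h2⟩
    have := h1 (τ j)
    rw [hperj (τ j), Equiv.Perm.coe_inv, Equiv.symm_apply_apply] at this
    exact this
end
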